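/- With the notation of the block-operator identity, 0 ≤ P_W L P_W − L_{[W]} ≤ P_W L P_{W^c} L P_W in the Loewner order; i.e., the difference P_W L P_W − L_{[W]} is a positive operator bounded above by the operator N_W = P_W L P_{W^c} L P_W. -/

import Mathlib

open ContinuousLinearMap

set_option maxHeartbeats 3200000 in
theorem L_kernel_difference_loewner_bounds
    {H : Type*} [NormedAddCommGroup H] [InnerProductSpace ℂ H] [CompleteSpace H]
    (P K L LW : H →L[ℂ] H)
    (hPidem : P * P = P) (hPsa : IsSelfAdjoint P)
    (hKpos : K.IsPositive) (hKnorm : ‖K‖ < 1)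
    -- L = K (I - K)⁻¹
    (hL1 : (1 + L) * (1 - K) = 1) (hL2 : (1 - K) * (1 + L) = 1)
    -- LW = K_W (I_W - K_W)⁻¹ as an operator supported on H_W = range P
    (hLWsupp : LW = P * LW * P)
    (hLWinv1 : (P + LW) * (P - P * K * P) = P)
    (hLWinv2 : (P - P * K * P) * (P + LW) = P) :
    (P * L * P - LW).IsPositive ∧
      (P * L * (1 - P) * L * P - (P * L * P - LW)).IsPositive := by
  classical
  set M : H →L[ℂ] H := 1 + L with hM
  set A : H →L[ℂ] H := 1 - K with hA
  set Q : H →L[ℂ] H := 1 - P with hQdef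
  clear_value M A Q
  have hKsa : IsSelfAdjoint K := hKpos.isSelfAdjoint
  -- basic projection algebra
  have hQP : Q * P = 0 := by
    rw [hQdef]
    calc (1 - P) * P = P - P * P := by noncomm_ring
    _ = 0 := by rw [hPidem]; abel
  have hPQ : P * Q = 0 := by
    rw [hQdef]
    calc P * (1 - P) = P - P * P := by noncomm_ring
    _ = 0 := by rw [hPidem]; abel
  have hQQ : Q * Q = Q := by
    rw [hQdef]
    calc (1 - P) * (1 - P) = 1 - P - (P - P * P) := by noncomm_ring
    _ = 1 - P := by rw [hPidem]; abel
  have hQsa : IsSelfAdjoint Q := by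
    rw [hQdef]; exact (IsSelfAdjoint.one (R := H →L[ℂ] H)).sub hPsa
  -- L is self-adjoint
  have hLsa : IsSelfAdjoint L := by
    have h1 : (1 + star L) * A = 1 := by
      have h := congrArg star hL2
      simp only [star_mul, star_one, hM, hA, star_sub, star_add, hKsa.star_eq] at h
      rw [hA]
      exact h
    have h2 : (1 : H →L[ℂ] H) + star L = M := by
      calc (1 : H →L[ℂ] H) + star L = (1 + star L) * (A * M) := by rw [hL2, mul_one]
      _ = ((1 + star L) * A) * M := by rw [mul_assoc]
      _ = M := by rw [h1, one_mul]
    have h3 : (1 : H →L[ℂ] H) + star L = 1 + L := by rw [h2, hM]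
    exact add_left_cancel h3
  -- L is positive
  have hkey : ∀ y : H, ‖K y‖ ^ 2 ≤ RCLike.re (inner ℂ (K y) y : ℂ) := by
    have hK0 : (0 : H →L[ℂ] H) ≤ K := (nonneg_iff_isPositive K).mpr hKpos
    have hRsa : IsSelfAdjoint (CFC.sqrt K) := IsSelfAdjoint.of_nonneg (CFC.sqrt_nonneg K)
    have hRR : CFC.sqrt K * CFC.sqrt K = K := CFC.sqrt_mul_sqrt_self K hK0
    have hRnorm : ‖CFC.sqrt K‖ ≤ 1 := by
      have h := CStarRing.norm_star_mul_self (x := CFC.sqrt K)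
      rw [hRsa.star_eq, hRR] at h
      nlinarith [norm_nonneg (CFC.sqrt K), hKnorm.le]
    intro y
    have hKy : K y = CFC.sqrt K (CFC.sqrt K y) := by
      rw [← ContinuousLinearMap.mul_apply, hRR]
    have h1 : RCLike.re (inner ℂ (K y) y : ℂ) = ‖CFC.sqrt K y‖ ^ 2 := by
      have h2 := ContinuousLinearMap.adjoint_inner_left (CFC.sqrt K) y (CFC.sqrt K y)
      rw [hRsa.adjoint_eq] at h2
      rw [hKy, h2]
      exact inner_self_eq_norm_sq _
    have h2 : ‖K y‖ ≤ ‖CFC.sqrt K y‖ := by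
      rw [hKy]
      calc ‖CFC.sqrt K (CFC.sqrt K y)‖ ≤ ‖CFC.sqrt K‖ * ‖CFC.sqrt K y‖ := le_opNorm _ _
      _ ≤ 1 * ‖CFC.sqrt K y‖ := by
          exact mul_le_mul_of_nonneg_right hRnorm (norm_nonneg _)
      _ = ‖CFC.sqrt K y‖ := one_mul _
    rw [h1]
    exact pow_le_pow_left₀ (norm_nonneg _) h2 2
  have hLA : L * A = K := by
    have h : (1 : H →L[ℂ] H) + L * A = 1 + K := by
      calc (1 : H →L[ℂ] H) + L * A = M * A + K := by rw [hM, hA]; noncomm_ring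
      _ = 1 + K := by rw [hL1]
    exact add_left_cancel h
  have hLpos : L.IsPositive := by
    refine isPositive_def'.mpr ⟨hLsa, fun x => ?_⟩
    rw [ContinuousLinearMap.reApplyInnerSelf_apply]
    set y : H := M x with hy
    have h0 : A y = x := by
      have := ContinuousLinearMap.ext_iff.mp hL2 x
      simpa [ContinuousLinearMap.mul_apply, hy] using this
    have hLx : L x = K y := by
      conv_lhs => rw [← h0]
      rw [show L (A y) = (L * A) y from rfl, hLA]
    have hxA : x = y - K y := by
      rw [← h0, hA]
      simp [ContinuousLinearMap.sub_apply]
    rw [hLx, hxA, inner_sub_right, map_sub]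
    have h1 : RCLike.re (inner ℂ (K y) (K y) : ℂ) = ‖K y‖ ^ 2 :=
      inner_self_eq_norm_sq _
    rw [h1]
    linarith [hkey y]
  -- the operator T = 1 + Q L Q and its inverse
  set T : H →L[ℂ] H := 1 + Q * L * Q with hT
  clear_value T
  have hTapp : ∀ x, T x = x + Q (L (Q x)) := by
    intro x
    simp [hT, ContinuousLinearMap.add_apply, ContinuousLinearMap.mul_apply]
  have hTre : ∀ x, RCLike.re (inner ℂ (T x) x : ℂ)
      = ‖x‖ ^ 2 + RCLike.re (inner ℂ (L (Q x)) (Q x) : ℂ) := by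
    intro x
    have h2 := ContinuousLinearMap.adjoint_inner_left Q x (L (Q x))
    rw [hQsa.adjoint_eq] at h2
    rw [hTapp, inner_add_left, map_add, inner_self_eq_norm_sq, h2]
  have hTlow : ∀ x, ‖x‖ ^ 2 ≤ RCLike.re (inner ℂ (T x) x : ℂ) := by
    intro x
    rw [hTre]
    have := hLpos.re_inner_nonneg_left (Q x)
    linarith [this]
  have hTunit : IsUnit T := by
    refine isUnit_of_forall_le_norm_inner_map T (c := 1) one_pos fun x => ?_
    rw [NNReal.coe_one, mul_one]
    calc ‖x‖ ^ 2 ≤ RCLike.re (inner ℂ (T x) x : ℂ) := hTlow x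
    _ ≤ ‖(inner ℂ (T x) x : ℂ)‖ := RCLike.re_le_norm _
  obtain ⟨T', hT'T, hTT'⟩ : ∃ T' : H →L[ℂ] H, T' * T = 1 ∧ T * T' = 1 :=
    ⟨_, hTunit.val_inv_mul, hTunit.mul_val_inv⟩
  have hTsa : IsSelfAdjoint T := by
    have h : star (Q * L * Q) = Q * L * Q := by
      rw [star_mul, star_mul, hQsa.star_eq, hLsa.star_eq, mul_assoc]
    rw [hT]
    exact (IsSelfAdjoint.one (R := H →L[ℂ] H)).add h
  have hT'sa : IsSelfAdjoint T' := by
    have h1 : star T' * T = 1 := by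
      have := congrArg star hTT'
      rwa [star_mul, hTsa.star_eq, star_one] at this
    calc star T' = star T' * (T * T') := by rw [hTT', mul_one]
    _ = (star T' * T) * T' := by rw [mul_assoc]
    _ = T' := by rw [h1, one_mul]
  have hTQ : T * Q = Q * T := by
    have ha : T * Q = Q + Q * L * (Q * Q) := by rw [hT]; noncomm_ring
    have hb : Q * T = Q + (Q * Q) * L * Q := by rw [hT]; noncomm_ring
    rw [ha, hb, hQQ]
  have hQT' : Q * T' = T' * Q := by
    calc Q * T' = (T' * T) * (Q * T') := by rw [hT'T, one_mul]
    _ = T' * ((T * Q) * T') := by rw [mul_assoc, ← mul_assoc T Q T']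
    _ = T' * ((Q * T) * T') := by rw [hTQ]
    _ = T' * (Q * (T * T')) := by rw [mul_assoc]
    _ = T' * Q := by rw [hTT', mul_one]
  have hTT'app : ∀ x, T (T' x) = x := by
    intro x
    have := ContinuousLinearMap.ext_iff.mp hTT' x
    simpa [ContinuousLinearMap.mul_apply] using this
  have hT'pos : T'.IsPositive := by
    refine isPositive_def'.mpr ⟨hT'sa, fun x => ?_⟩
    rw [ContinuousLinearMap.reApplyInnerSelf_apply]
    set y : H := T' x with hy
    have hxy : T y = x := hTT'app x
    rw [← hxy, inner_re_symm]
    have := hTlow y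
    have h0 : (0:ℝ) ≤ ‖y‖ ^ 2 := sq_nonneg _
    linarith
  have h1T'pos : ((1 : H →L[ℂ] H) - T').IsPositive := by
    refine isPositive_def'.mpr ⟨(IsSelfAdjoint.one (R := H →L[ℂ] H)).sub hT'sa, fun x => ?_⟩
    rw [ContinuousLinearMap.reApplyInnerSelf_apply]
    have hre : RCLike.re (inner ℂ (((1 : H →L[ℂ] H) - T') x) x : ℂ)
        = ‖x‖ ^ 2 - RCLike.re (inner ℂ (T' x) x : ℂ) := by
      rw [ContinuousLinearMap.sub_apply, ContinuousLinearMap.one_apply,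
        inner_sub_left, map_sub, inner_self_eq_norm_sq]
    rw [hre]
    set y : H := T' x with hy
    have hxy : T y = x := hTT'app x
    have h2 : ‖y‖ ^ 2 ≤ RCLike.re (inner ℂ (T y) y : ℂ) := hTlow y
    have h3 : RCLike.re (inner ℂ (T y) y : ℂ) ≤ ‖T y‖ * ‖y‖ :=
      le_trans (RCLike.re_le_norm _) (norm_inner_le_norm _ _)
    have h4 : ‖y‖ ≤ ‖T y‖ := by
      rcases eq_or_lt_of_le (norm_nonneg y) with h0 | h0
      · rw [← h0]; exact norm_nonneg _
      · have h5 : ‖y‖ * ‖y‖ ≤ ‖T y‖ * ‖y‖ := by nlinarith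
        exact le_of_mul_le_mul_right h5 h0
    have h6 : RCLike.re (inner ℂ y x : ℂ) ≤ ‖x‖ ^ 2 := by
      rw [← hxy, inner_re_symm]
      calc RCLike.re (inner ℂ (T y) y : ℂ) ≤ ‖T y‖ * ‖y‖ := h3
      _ ≤ ‖T y‖ * ‖T y‖ := by
          exact mul_le_mul_of_nonneg_left h4 (norm_nonneg _)
      _ = ‖T y‖ ^ 2 := by ring
    linarith
  -- Schur complement algebra
  have hQMQ : Q * M * Q = T - P := by
    calc Q * M * Q = Q * Q + Q * L * Q := by rw [hM]; noncomm_ring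
    _ = Q + Q * L * Q := by rw [hQQ]
    _ = T - P := by rw [hT, hQdef]; noncomm_ring
  have e2 : Q * M * P * A * P = -(Q * M * Q * A * P) := by
    have h1 : Q * M * P * A * P + Q * M * Q * A * P = Q * (M * A) * P := by
      rw [hQdef]; noncomm_ring
    have h2 : Q * (M * A) * P = 0 := by
      rw [hL1, mul_one, hQP]
    have h3 : Q * M * P * A * P + Q * M * Q * A * P = 0 := h1.trans h2
    exact eq_neg_of_add_eq_zero_left h3
  have e3 : P * M * Q * T' * (Q * M * Q) * A * P = P * M * Q * A * P := by
    calc P * M * Q * T' * (Q * M * Q) * A * P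
        = P * M * Q * T' * (T - P) * A * P := by rw [hQMQ]
    _ = P * M * Q * (T' * T) * A * P - P * M * (Q * T') * P * A * P := by noncomm_ring
    _ = P * M * Q * (T' * T) * A * P - P * M * (T' * Q) * P * A * P := by rw [hQT']
    _ = P * M * Q * A * P - P * M * T' * (Q * P) * A * P := by rw [hT'T]; noncomm_ring
    _ = P * M * Q * A * P := by rw [hQP]; noncomm_ring
  have e4 : P * M * Q * T' * (Q * M * P * A * P) = -(P * M * Q * A * P) := by
    calc P * M * Q * T' * (Q * M * P * A * P)
        = P * M * Q * T' * (-(Q * M * Q * A * P)) := by rw [e2]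
    _ = -(P * M * Q * T' * (Q * M * Q) * A * P) := by noncomm_ring
    _ = -(P * M * Q * A * P) := by rw [e3]
  have e5 : P * M * P * A * P = P - P * M * Q * A * P := by
    have h1 : P * M * P * A * P + P * M * Q * A * P = P * (M * A) * P := by
      rw [hQdef]; noncomm_ring
    have h2 : P * (M * A) * P = P := by rw [hL1, mul_one, hPidem]
    exact eq_sub_of_add_eq (h1.trans h2)
  have eS : (P * M * P - P * M * Q * T' * (Q * M * P)) * (P * A * P) = P := by
    calc (P * M * P - P * M * Q * T' * (Q * M * P)) * (P * A * P)
        = P * M * (P * P) * A * P - P * M * Q * T' * (Q * M * (P * P) * A * P) := by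
          noncomm_ring
    _ = P * M * P * A * P - P * M * Q * T' * (Q * M * P * A * P) := by rw [hPidem]
    _ = (P - P * M * Q * A * P) - (-(P * M * Q * A * P)) := by rw [e5, e4]
    _ = P := by noncomm_ring
  have hA11 : P * A * P = P - P * K * P := by
    calc P * A * P = P * P - P * K * P := by rw [hA]; noncomm_ring
    _ = P - P * K * P := by rw [hPidem]
  have hPLW : P * LW = LW := by
    rw [hLWsupp]
    calc P * (P * LW * P) = (P * P) * LW * P := by noncomm_ring
    _ = P * LW * P := by rw [hPidem]
  have hS : P + LW = P * M * P - P * M * Q * T' * (Q * M * P) := by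
    have h1 : (P * A * P) * (P + LW) = P := by rw [hA11]; exact hLWinv2
    calc P + LW = P * P + P * LW := by rw [hPidem, hPLW]
    _ = P * (P + LW) := by rw [mul_add]
    _ = ((P * M * P - P * M * Q * T' * (Q * M * P)) * (P * A * P)) * (P + LW) := by
        rw [eS]
    _ = (P * M * P - P * M * Q * T' * (Q * M * P)) * ((P * A * P) * (P + LW)) := by
        rw [mul_assoc]
    _ = (P * M * P - P * M * Q * T' * (Q * M * P)) * P := by rw [h1]
    _ = P * M * (P * P) - P * M * Q * T' * (Q * M * (P * P)) := by noncomm_ring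
    _ = P * M * P - P * M * Q * T' * (Q * M * P) := by rw [hPidem]
  have hPMQ : P * M * Q = P * L * Q := by
    calc P * M * Q = P * Q + P * L * Q := by rw [hM]; noncomm_ring
    _ = P * L * Q := by rw [hPQ]; noncomm_ring
  have hQMP : Q * M * P = Q * L * P := by
    calc Q * M * P = Q * P + Q * L * P := by rw [hM]; noncomm_ring
    _ = Q * L * P := by rw [hQP]; noncomm_ring
  have hPMP : P * M * P = P + P * L * P := by
    calc P * M * P = P * P + P * L * P := by rw [hM]; noncomm_ring
    _ = P + P * L * P := by rw [hPidem]
  have hD : P * L * P - LW = (P * L * Q) * (T' * (Q * L * P)) := by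
    calc P * L * P - LW = (P + P * L * P) - (P + LW) := by noncomm_ring
    _ = (P + P * L * P) - (P * M * P - P * M * Q * T' * (Q * M * P)) := by rw [hS]
    _ = (P + P * L * P) - ((P + P * L * P) - P * L * Q * T' * (Q * L * P)) := by
        rw [hPMP, hPMQ, hQMP]
    _ = (P * L * Q) * (T' * (Q * L * P)) := by noncomm_ring
  -- conclude positivity
  have hCstar : ContinuousLinearMap.adjoint (Q * L * P) = P * L * Q := by
    rw [← ContinuousLinearMap.star_eq_adjoint, star_mul, star_mul, hQsa.star_eq,
      hLsa.star_eq, hPsa.star_eq, mul_assoc]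
  constructor
  · rw [hD]
    have h := hT'pos.adjoint_conj (Q * L * P)
    rwa [hCstar] at h
  · have hgoal : P * L * Q * L * P - (P * L * P - LW)
        = (P * L * Q) * ((1 - T') * (Q * L * P)) := by
      rw [hD]
      calc P * L * Q * L * P - (P * L * Q) * (T' * (Q * L * P))
          = P * L * (Q * Q) * L * P - (P * L * Q) * (T' * (Q * L * P)) := by rw [hQQ]
      _ = (P * L * Q) * ((1 - T') * (Q * L * P)) := by noncomm_ring
    rw [hgoal]
    have h := h1T'pos.adjoint_conj (Q * L * P)
    rwa [hCstar] at h
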